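/- Let n ≥ 1 and A : Matrix (Fin n) (Fin n) ℂ, and suppose A is power-bounded: there exists C ∈ ℝ such that for every k ∈ ℕ every entry of A^k has absolute value at most C. Then every eigenvalue λ ∈ ℂ of A satisfies |λ| ≤ 1, and every eigenvalue λ with |λ| = 1 has coinciding algebraic and geometric multiplicity: the multiplicity of λ as a root of the characteristic polynomial of A equals the dimension of the eigenspace ker(A − λ·1). -/

import Mathlib

open Matrix Polynomial

section Aux

variable {n : ℕ}

private lemma aux_charpoly_sub_smul_one (A : Matrix (Fin n) (Fin n) ℂ) (μ : ℂ) :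
    (A - μ • (1 : Matrix (Fin n) (Fin n) ℂ)).charpoly = (A.charpoly).comp (X + C μ) := by
  have haev : ∀ p : ℂ[X], aeval (X + C μ : ℂ[X]) p = p.comp (X + C μ) := by
    intro p
    rw [Polynomial.comp, aeval_def, Polynomial.algebraMap_eq]
  have hmap : charmatrix (A - μ • (1 : Matrix (Fin n) (Fin n) ℂ))
      = (charmatrix A).map (aeval (X + C μ : ℂ[X]) : ℂ[X] →ₐ[ℂ] ℂ[X]) := by
    ext i j
    by_cases h : i = j
    · subst h
      simp only [charmatrix_apply_eq, Matrix.map_apply, map_sub, aeval_X, aeval_C,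
        Polynomial.algebraMap_eq, Matrix.sub_apply, Matrix.smul_apply, Matrix.one_apply_eq,
        smul_eq_mul, mul_one, map_sub]
      ring_nf
    · simp only [charmatrix_apply_ne _ _ _ h, Matrix.map_apply, map_neg, aeval_C,
        Polynomial.algebraMap_eq, Matrix.sub_apply, Matrix.smul_apply, Matrix.one_apply_ne h,
        smul_eq_mul, mul_zero, sub_zero]
  rw [Matrix.charpoly, hmap, Matrix.charpoly, ← haev]
  exact (((aeval (X + C μ : ℂ[X]) : ℂ[X] →ₐ[ℂ] ℂ[X]) : ℂ[X] →+* ℂ[X]).map_det (charmatrix A)).symm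

private lemma aux_det_sub_smul_one (A : Matrix (Fin n) (Fin n) ℂ) {lam : ℂ}
    (h : (Matrix.charpoly A).IsRoot lam) :
    (A - lam • (1 : Matrix (Fin n) (Fin n) ℂ)).det = 0 := by
  have h2 : (charmatrix A).map (evalRingHom lam)
      = lam • (1 : Matrix (Fin n) (Fin n) ℂ) - A := by
    ext i j
    by_cases hij : i = j
    · subst hij
      simp [charmatrix_apply_eq]
    · simp [charmatrix_apply_ne _ _ _ hij, Matrix.one_apply_ne hij]
  have h1 : (lam • (1 : Matrix (Fin n) (Fin n) ℂ) - A).det = 0 := by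
    rw [← h2]
    have := (RingHom.map_det (evalRingHom lam) (charmatrix A)).symm
    rw [show ((evalRingHom lam).mapMatrix (charmatrix A)) = (charmatrix A).map (evalRingHom lam) from rfl] at this
    rw [this]
    exact h
  have h3 : A - lam • (1 : Matrix (Fin n) (Fin n) ℂ)
      = -(lam • (1 : Matrix (Fin n) (Fin n) ℂ) - A) := (neg_sub _ _).symm
  rw [h3, Matrix.det_neg, h1, mul_zero]

private lemma aux_mulVec_bound {C : ℝ} {M : Matrix (Fin n) (Fin n) ℂ}
    (hM : ∀ i j, ‖M i j‖ ≤ C) (w : Fin n → ℂ) (i : Fin n) :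
    ‖M.mulVec w i‖ ≤ ∑ j, C * ‖w j‖ := by
  have h0 : M.mulVec w i = ∑ j, M i j * w j := rfl
  rw [h0]
  refine (norm_sum_le _ _).trans ?_
  refine Finset.sum_le_sum fun j _ => ?_
  rw [norm_mul]
  exact mul_le_mul_of_nonneg_right (hM i j) (norm_nonneg _)

private lemma aux_pow_mulVec_eig (A : Matrix (Fin n) (Fin n) ℂ) (lam : ℂ) (v : Fin n → ℂ)
    (hv : A.mulVec v = lam • v) (k : ℕ) : (A ^ k).mulVec v = (lam ^ k) • v := by
  induction k with
  | zero => simp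
  | succ k ih =>
    rw [pow_succ', ← Matrix.mulVec_mulVec, ih, Matrix.mulVec_smul, hv, smul_smul, ← pow_succ]

private lemma aux_pow_mulVec_gen (A : Matrix (Fin n) (Fin n) ℂ) (lam : ℂ) (hlam : lam ≠ 0)
    (v w : Fin n → ℂ) (hv : A.mulVec v = lam • v) (hw : A.mulVec w = lam • w + v) (k : ℕ) :
    (A ^ k).mulVec w = (lam ^ k) • w + ((k : ℂ) * lam ^ k * lam⁻¹) • v := by
  induction k with
  | zero => simp
  | succ k ih =>
    rw [pow_succ', ← Matrix.mulVec_mulVec, ih, Matrix.mulVec_add, Matrix.mulVec_smul,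
      Matrix.mulVec_smul, hv, hw]
    push_cast
    match_scalars
    · ring
    · field_simp
      ring_nf

end Aux

/-- A power-bounded complex matrix has all eigenvalues in the closed unit disk, and every
eigenvalue on the unit circle has coinciding algebraic and geometric multiplicity. -/
theorem power_bounded_eigenvalues (n : ℕ) (hn : 1 ≤ n) (A : Matrix (Fin n) (Fin n) ℂ)
    (C : ℝ) (hC : ∀ k : ℕ, ∀ i j : Fin n, ‖(A ^ k) i j‖ ≤ C) :
    ∀ lam : ℂ, (Matrix.charpoly A).IsRoot lam →
      ‖lam‖ ≤ 1 ∧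
      (‖lam‖ = 1 →
        (Matrix.charpoly A).rootMultiplicity lam =
          Module.finrank ℂ
            (LinearMap.ker (Matrix.toLin' (A - lam • (1 : Matrix (Fin n) (Fin n) ℂ))))) := by
  intro lam hroot
  have hdet := aux_det_sub_smul_one A hroot
  obtain ⟨v, hv0, hveq⟩ := (Matrix.exists_mulVec_eq_zero_iff).mpr hdet
  have hv : A.mulVec v = lam • v := by
    have := hveq
    rw [Matrix.sub_mulVec, sub_eq_zero, Matrix.smul_mulVec, Matrix.one_mulVec] at this
    exact this
  obtain ⟨i, hvi⟩ := Function.ne_iff.mp hv0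
  have hvi' : 0 < ‖v i‖ := norm_pos_iff.mpr hvi
  constructor
  · -- |lam| ≤ 1
    by_contra hlt
    push_neg at hlt
    set D := ∑ j, C * ‖v j‖ with hD
    have hb : ∀ k : ℕ, ‖lam‖ ^ k * ‖v i‖ ≤ D := by
      intro k
      have h1 := aux_mulVec_bound (hC k) v i
      rw [aux_pow_mulVec_eig A lam v hv k] at h1
      simpa [norm_mul, norm_pow, Pi.smul_apply, smul_eq_mul] using h1
    obtain ⟨k, hk⟩ := pow_unbounded_of_one_lt (D / ‖v i‖) hlt
    have := hb k
    rw [div_lt_iff₀ hvi'] at hk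
    linarith
  · -- multiplicity statement
    intro habs
    have hlam0 : lam ≠ 0 := by
      intro h
      rw [h] at habs
      simp at habs
    set ψ := Matrix.toLin' (A - lam • (1 : Matrix (Fin n) (Fin n) ℂ)) with hψ
    -- Key: ker (ψ ∘ ψ) ≤ ker ψ
    have hker2 : ∀ w : Fin n → ℂ, ψ (ψ w) = 0 → ψ w = 0 := by
      intro w hw2
      by_contra hne
      set u := ψ w with hu
      have hu' : u = (A - lam • (1 : Matrix (Fin n) (Fin n) ℂ)).mulVec w := by
        rw [hu, hψ, Matrix.toLin'_apply]
      have hAu : A.mulVec u = lam • u := by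
        have : (A - lam • (1 : Matrix (Fin n) (Fin n) ℂ)).mulVec u = 0 := by
          rw [← Matrix.toLin'_apply, ← hψ]; exact hw2
        rw [Matrix.sub_mulVec, sub_eq_zero, Matrix.smul_mulVec, Matrix.one_mulVec] at this
        exact this
      have hAw : A.mulVec w = lam • w + u := by
        rw [hu', Matrix.sub_mulVec, Matrix.smul_mulVec, Matrix.one_mulVec]
        abel
      obtain ⟨i₀, hui⟩ := Function.ne_iff.mp hne
      have hui' : 0 < ‖u i₀‖ := norm_pos_iff.mpr hui
      set D := ∑ j, C * ‖w j‖ with hD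
      have hb : ∀ k : ℕ, (k : ℝ) * ‖u i₀‖ ≤ D + ‖w i₀‖ := by
        intro k
        have h1 := aux_mulVec_bound (hC k) w i₀
        rw [aux_pow_mulVec_gen A lam hlam0 u w hAu hAw k] at h1
        have heq : ((k : ℂ) * lam ^ k * lam⁻¹) • u i₀
            = ((lam ^ k • w + ((k : ℂ) * lam ^ k * lam⁻¹) • u) i₀) - lam ^ k * w i₀ := by
          simp [Pi.add_apply, Pi.smul_apply, smul_eq_mul]
        have h2 : (k : ℝ) * ‖u i₀‖
            ≤ ‖(lam ^ k • w + ((k : ℂ) * lam ^ k * lam⁻¹) • u) i₀‖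
              + ‖w i₀‖ := by
          have h3 : ‖((k : ℂ) * lam ^ k * lam⁻¹) * u i₀‖
              = (k : ℝ) * ‖u i₀‖ := by
            simp [norm_mul, norm_pow, norm_inv, habs]
          calc (k : ℝ) * ‖u i₀‖
              = ‖((k : ℂ) * lam ^ k * lam⁻¹) * u i₀‖ := h3.symm
            _ = ‖((lam ^ k • w + ((k : ℂ) * lam ^ k * lam⁻¹) • u) i₀)
                  - lam ^ k * w i₀‖ := by rw [← heq]; simp [Pi.smul_apply, smul_eq_mul]
            _ ≤ ‖(lam ^ k • w + ((k : ℂ) * lam ^ k * lam⁻¹) • u) i₀‖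
                  + ‖lam ^ k * w i₀‖ := norm_sub_le _ _
            _ = ‖(lam ^ k • w + ((k : ℂ) * lam ^ k * lam⁻¹) • u) i₀‖
                  + ‖w i₀‖ := by rw [norm_mul, norm_pow, habs, one_pow, one_mul]
        linarith
      obtain ⟨k, hk⟩ := exists_nat_gt ((D + ‖w i₀‖) / ‖u i₀‖)
      have := hb k
      rw [div_lt_iff₀ hui'] at hk
      linarith
    -- from hker2: all iterated kernels collapse
    have hkerpow : ∀ k : ℕ, LinearMap.ker (ψ ^ k) ≤ LinearMap.ker ψ := by
      intro k
      induction k with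
      | zero =>
        intro x hx
        simp only [pow_zero, LinearMap.mem_ker, Module.End.one_apply] at hx
        simp [LinearMap.mem_ker, hx]
      | succ k ih =>
        intro x hx
        simp only [LinearMap.mem_ker] at hx ⊢
        have hx' : (ψ ^ k) (ψ x) = 0 := by
          rw [← Module.End.mul_apply, ← pow_succ]
          exact hx
        have h1 : ψ (ψ x) = 0 := ih hx'
        exact hker2 x h1
    have hmax : Module.End.maxGenEigenspace ψ 0 = LinearMap.ker ψ := by
      have hV : Module.End.maxGenEigenspace ψ 0 = ⨆ k : ℕ, LinearMap.ker (ψ ^ k) := by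
        simp [← Module.End.iSup_genEigenspace_eq, Module.End.genEigenspace_nat]
      rw [hV]
      refine le_antisymm (iSup_le hkerpow) (le_iSup_of_le 1 ?_)
      simp
    have hchar : LinearMap.charpoly ψ
        = (A - lam • (1 : Matrix (Fin n) (Fin n) ℂ)).charpoly := by
      have h := LinearMap.charpoly_toMatrix ψ (Pi.basisFun ℂ (Fin n))
      rw [← h]
      congr 1
      have h2 : (LinearMap.toMatrix (Pi.basisFun ℂ (Fin n)) (Pi.basisFun ℂ (Fin n))) ψ
          = LinearMap.toMatrix' ψ := rfl
      rw [h2, hψ, LinearMap.toMatrix'_toLin']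
    rw [Polynomial.rootMultiplicity_eq_natTrailingDegree, ← aux_charpoly_sub_smul_one A lam,
      ← hchar, ← LinearMap.finrank_maxGenEigenspace_zero_eq, hmax]
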